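/- If (δ_n)_{n≥0} is a complex sequence of finite strong 1-variation and (z_n)_{n≥0} is a complex sequence of finite strong q-variation (2 < q < ∞), then the pointwise product (δ_n z_n)_{n≥0} has finite strong q-variation and ‖(δ_n z_n)‖_{v^q} ≤ 3 ‖(δ_n)‖_{v^1} · ‖(z_n)‖_{v^q}. -/

import Mathlib

open scoped ENNReal

/-- Strong q-variation "norm" of a complex sequence, valued in `ℝ≥0∞`. -/
noncomputable def vq (q : ℝ) (a : ℕ → ℂ) : ℝ≥0∞ :=
  ⨆ n ∈ {n : ℕ → ℕ | StrictMono n ∧ n 0 = 0},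
    ((‖a (n 0)‖₊ : ℝ≥0∞) ^ q + ∑' k : ℕ, (‖a (n (k+1)) - a (n k)‖₊ : ℝ≥0∞) ^ q) ^ (1/q)

private lemma term_le_vq (q : ℝ) (a : ℕ → ℂ) {n : ℕ → ℕ} (hn : StrictMono n ∧ n 0 = 0) :
    ((‖a (n 0)‖₊ : ℝ≥0∞) ^ q + ∑' k : ℕ, (‖a (n (k+1)) - a (n k)‖₊ : ℝ≥0∞) ^ q) ^ (1/q)
      ≤ vq q a :=
  le_iSup₂ (f := fun (n : ℕ → ℕ) (_ : n ∈ {n : ℕ → ℕ | StrictMono n ∧ n 0 = 0}) =>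
    ((‖a (n 0)‖₊ : ℝ≥0∞) ^ q + ∑' k : ℕ, (‖a (n (k+1)) - a (n k)‖₊ : ℝ≥0∞) ^ q) ^ (1/q)) n hn

/-- the jump sequence 0, m+1, m+2, m+3, ... -/
private def jseq (m : ℕ) : ℕ → ℕ
  | 0 => 0
  | k + 1 => m + 1 + k

private lemma jseq_mono (m : ℕ) : StrictMono (jseq m) := by
  apply strictMono_nat_of_lt_succ
  intro k
  cases k with
  | zero => simp [jseq]
  | succ j => simp [jseq]

private lemma rpow_q_le_q {q : ℝ} (hq0 : 0 < q) {x y : ℝ≥0∞} (h : x ^ q ≤ y ^ q) : x ≤ y :=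
  (ENNReal.rpow_le_rpow_iff hq0).mp h

private lemma self_eq_rpow_rpow {q : ℝ} (hq0 : 0 < q) (x : ℝ≥0∞) :
    (x ^ q) ^ (1/q) = x := by
  rw [← ENNReal.rpow_mul, mul_one_div, div_self hq0.ne', ENNReal.rpow_one]

/-- First value bound: `‖a 0‖ ≤ vq q a` -/
private lemma nn_zero_le_vq {q : ℝ} (hq0 : 0 < q) (a : ℕ → ℂ) :
    (‖a 0‖₊ : ℝ≥0∞) ≤ vq q a := by
  have h := term_le_vq q a (n := id) ⟨strictMono_id, rfl⟩
  refine le_trans ?_ h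
  conv_lhs => rw [← self_eq_rpow_rpow hq0 ((‖a 0‖₊ : ℝ≥0∞))]
  exact ENNReal.rpow_le_rpow le_self_add (by positivity)

/-- Jump bound: `‖a m - a 0‖ ≤ vq q a` -/
private lemma nn_jump_le_vq {q : ℝ} (hq0 : 0 < q) (a : ℕ → ℂ) (m : ℕ) :
    (‖a m - a 0‖₊ : ℝ≥0∞) ≤ vq q a := by
  cases m with
  | zero => simp
  | succ m =>
    have h := term_le_vq q a (n := jseq m) ⟨jseq_mono m, rfl⟩
    refine le_trans ?_ h
    rw [← self_eq_rpow_rpow hq0 ((‖a (m+1) - a 0‖₊ : ℝ≥0∞))]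
    refine ENNReal.rpow_le_rpow ?_ (by positivity)
    calc (‖a (m+1) - a 0‖₊ : ℝ≥0∞) ^ q
        = (‖a (jseq m (0+1)) - a (jseq m 0)‖₊ : ℝ≥0∞) ^ q := by
          simp [jseq]
      _ ≤ ∑' k : ℕ, (‖a (jseq m (k+1)) - a (jseq m k)‖₊ : ℝ≥0∞) ^ q :=
          ENNReal.le_tsum 0
      _ ≤ _ := le_add_self

private lemma nn_le_two_vq {q : ℝ} (hq0 : 0 < q) (a : ℕ → ℂ) (m : ℕ) :
    (‖a m‖₊ : ℝ≥0∞) ≤ 2 * vq q a := by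
  have h1 : (‖a m‖₊ : ℝ≥0∞) ≤ (‖a 0‖₊ : ℝ≥0∞) + (‖a m - a 0‖₊ : ℝ≥0∞) := by
    have : a m = a 0 + (a m - a 0) := by ring
    calc (‖a m‖₊ : ℝ≥0∞) = (‖a 0 + (a m - a 0)‖₊ : ℝ≥0∞) := by rw [← this]
      _ ≤ _ := by exact_mod_cast nnnorm_add_le _ _
  calc (‖a m‖₊ : ℝ≥0∞) ≤ (‖a 0‖₊ : ℝ≥0∞) + (‖a m - a 0‖₊ : ℝ≥0∞) := h1
    _ ≤ vq q a + vq q a := add_le_add (nn_zero_le_vq hq0 a) (nn_jump_le_vq hq0 a m)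
    _ = 2 * vq q a := (two_mul _).symm

/-- `vq 1` dominates the sum of jumps along any admissible subsequence, plus `‖δ 0‖`. -/
private lemma v1_term (δ : ℕ → ℂ) {n : ℕ → ℕ} (hn : StrictMono n ∧ n 0 = 0) :
    (‖δ 0‖₊ : ℝ≥0∞) + ∑' k : ℕ, (‖δ (n (k+1)) - δ (n k)‖₊ : ℝ≥0∞) ≤ vq 1 δ := by
  have h := term_le_vq 1 δ (n := n) hn
  simpa [hn.2, ENNReal.rpow_one] using h

private lemma nn_le_v1 (δ : ℕ → ℂ) (m : ℕ) : (‖δ m‖₊ : ℝ≥0∞) ≤ vq 1 δ := by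
  cases m with
  | zero =>
    refine le_trans ?_ (v1_term δ (n := id) ⟨strictMono_id, rfl⟩)
    exact le_self_add
  | succ m =>
    have h := v1_term δ (n := jseq m) ⟨jseq_mono m, rfl⟩
    refine le_trans ?_ h
    have h1 : (‖δ (m+1)‖₊ : ℝ≥0∞) ≤ (‖δ 0‖₊ : ℝ≥0∞) + (‖δ (m+1) - δ 0‖₊ : ℝ≥0∞) := by
      have : δ (m+1) = δ 0 + (δ (m+1) - δ 0) := by ring
      calc (‖δ (m+1)‖₊ : ℝ≥0∞) = (‖δ 0 + (δ (m+1) - δ 0)‖₊ : ℝ≥0∞) := by rw [← this]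
        _ ≤ _ := by exact_mod_cast nnnorm_add_le _ _
    refine h1.trans (add_le_add_right ?_ _)
    calc (‖δ (m+1) - δ 0‖₊ : ℝ≥0∞)
        = (‖δ (jseq m (0+1)) - δ (jseq m 0)‖₊ : ℝ≥0∞) := by simp [jseq]
      _ ≤ _ := ENNReal.le_tsum 0

/-- `ℓ^q ⊂ ℓ^1` : `(∑ e^q)^(1/q) ≤ ∑ e` for `q ≥ 1`. -/
private lemma lq_le_l1 {q : ℝ} (hq1 : 1 ≤ q) (e : ℕ → ℝ≥0∞) :
    (∑' k, e k ^ q) ^ (1/q) ≤ ∑' k, e k := by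
  have hq0 : 0 < q := lt_of_lt_of_le one_pos hq1
  set S := ∑' k, e k with hSdef
  rcases eq_or_ne S 0 with hS | hS
  · have he : ∀ k, e k = 0 := fun k => by
      have := ENNReal.le_tsum (f := e) k
      rw [← hSdef, hS] at this
      exact le_antisymm this bot_le
    simp [he, ENNReal.zero_rpow_of_pos hq0, ENNReal.zero_rpow_of_pos (inv_pos.mpr hq0)]
  rcases eq_or_ne S ∞ with hS' | hS'
  · rw [hS']; exact le_top
  have key : (∑' k, e k ^ q) ≤ S ^ q := by
    calc ∑' k, e k ^ q ≤ ∑' k, e k * S ^ (q-1) := by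
          refine ENNReal.tsum_le_tsum fun k => ?_
          calc e k ^ q = e k ^ (1 + (q-1)) := by ring_nf
            _ = e k ^ (1:ℝ) * e k ^ (q-1) :=
                ENNReal.rpow_add_of_nonneg _ _ zero_le_one (by linarith)
            _ ≤ e k * S ^ (q-1) := by
                rw [ENNReal.rpow_one]
                exact mul_le_mul_right (ENNReal.rpow_le_rpow (ENNReal.le_tsum k) (by linarith)) _
      _ = S * S ^ (q-1) := ENNReal.tsum_mul_right
      _ = S ^ q := by
          nth_rewrite 1 [← ENNReal.rpow_one S]
          rw [← ENNReal.rpow_add _ _ hS hS']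
          ring_nf
  calc (∑' k, e k ^ q) ^ (1/q) ≤ (S ^ q) ^ (1/q) :=
        ENNReal.rpow_le_rpow key (by positivity)
    _ = S := self_eq_rpow_rpow hq0 S

/-- Minkowski's inequality for `tsum` over `ℕ` in `ℝ≥0∞`. -/
private lemma minkowski_tsum {q : ℝ} (hq1 : 1 ≤ q) (u w : ℕ → ℝ≥0∞) :
    (∑' k, (u k + w k) ^ q) ^ (1/q)
      ≤ (∑' k, u k ^ q) ^ (1/q) + (∑' k, w k ^ q) ^ (1/q) := by
  have h := ENNReal.lintegral_Lp_add_le (μ := (MeasureTheory.Measure.count : MeasureTheory.Measure ℕ))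
      (f := u) (g := w) measurable_from_nat.aemeasurable measurable_from_nat.aemeasurable hq1
  simpa [MeasureTheory.lintegral_count] using h

/-- factor a constant out of an `ℓ^q` sum. -/
private lemma factor_lq {q : ℝ} (hq0 : 0 < q) (c : ℝ≥0∞) (x : ℕ → ℝ≥0∞) :
    (∑' k, (c * x k) ^ q) ^ (1/q) = c * (∑' k, x k ^ q) ^ (1/q) := by
  simp_rw [ENNReal.mul_rpow_of_nonneg _ _ hq0.le]
  rw [ENNReal.tsum_mul_left, ENNReal.mul_rpow_of_nonneg _ _ (by positivity : (0:ℝ) ≤ 1/q),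
    ← ENNReal.rpow_mul, mul_one_div, div_self hq0.ne', ENNReal.rpow_one]

/-- Multiplier lemma: `‖(δ_n z_n)‖_{v^q} ≤ 3 ‖(δ_n)‖_{v^1} ‖(z_n)‖_{v^q}`. -/
theorem stmt_5 (q : ℝ) (hq : 2 < q) (δ z : ℕ → ℂ)
    (hδ : vq 1 δ < ∞) (hz : vq q z < ∞) :
    vq q (fun n => δ n * z n) ≤ 3 * vq 1 δ * vq q z := by
  have hq1 : (1:ℝ) ≤ q := by linarith
  have hq0 : (0:ℝ) < q := by linarith
  set a : ℕ → ℂ := fun n => δ n * z n with ha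
  set D := vq 1 δ with hD
  set Z := vq q z with hZ
  rw [vq]
  refine iSup₂_le fun n hn => ?_
  obtain ⟨hmono, hn0⟩ := hn
  -- the combined sequence for the product, with the initial term at index 0
  set g : ℕ → ℝ≥0∞ := fun j =>
    Nat.casesOn j ((‖a 0‖₊ : ℝ≥0∞)) (fun k => (‖a (n (k+1)) - a (n k)‖₊ : ℝ≥0∞)) with hg
  set x : ℕ → ℝ≥0∞ := fun j =>
    Nat.casesOn j ((‖z 0‖₊ : ℝ≥0∞)) (fun k => (‖z (n (k+1)) - z (n k)‖₊ : ℝ≥0∞)) with hx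
  set e : ℕ → ℝ≥0∞ := fun j =>
    Nat.casesOn j (0 : ℝ≥0∞) (fun k => (‖δ (n (k+1)) - δ (n k)‖₊ : ℝ≥0∞)) with he
  -- pointwise bound g ≤ D • x + (2Z) • e
  have hgle : ∀ j, g j ≤ D * x j + (2 * Z) * e j := by
    intro j
    cases j with
    | zero =>
      show (‖a 0‖₊ : ℝ≥0∞) ≤ D * (‖z 0‖₊ : ℝ≥0∞) + (2 * Z) * 0
      rw [mul_zero, add_zero, ha]
      calc ((‖δ 0 * z 0‖₊ : ℝ≥0∞)) = (‖δ 0‖₊ : ℝ≥0∞) * (‖z 0‖₊ : ℝ≥0∞) := by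
            rw [nnnorm_mul]; push_cast; ring
        _ ≤ D * (‖z 0‖₊ : ℝ≥0∞) := mul_le_mul_left (nn_le_v1 δ 0) _
    | succ k =>
      show (‖a (n (k+1)) - a (n k)‖₊ : ℝ≥0∞)
          ≤ D * (‖z (n (k+1)) - z (n k)‖₊ : ℝ≥0∞) + (2 * Z) * (‖δ (n (k+1)) - δ (n k)‖₊ : ℝ≥0∞)
      have hid : a (n (k+1)) - a (n k)
          = δ (n (k+1)) * (z (n (k+1)) - z (n k)) + (δ (n (k+1)) - δ (n k)) * z (n k) := by
        simp only [ha]; ring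
      calc (‖a (n (k+1)) - a (n k)‖₊ : ℝ≥0∞)
          ≤ (‖δ (n (k+1)) * (z (n (k+1)) - z (n k))‖₊ : ℝ≥0∞)
            + (‖(δ (n (k+1)) - δ (n k)) * z (n k)‖₊ : ℝ≥0∞) := by
            rw [hid]; exact_mod_cast nnnorm_add_le _ _
        _ = (‖δ (n (k+1))‖₊ : ℝ≥0∞) * (‖z (n (k+1)) - z (n k)‖₊ : ℝ≥0∞)
            + (‖δ (n (k+1)) - δ (n k)‖₊ : ℝ≥0∞) * (‖z (n k)‖₊ : ℝ≥0∞) := by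
            rw [nnnorm_mul, nnnorm_mul]; push_cast; ring
        _ ≤ D * (‖z (n (k+1)) - z (n k)‖₊ : ℝ≥0∞)
            + (‖δ (n (k+1)) - δ (n k)‖₊ : ℝ≥0∞) * (2 * Z) := by
            gcongr
            · exact nn_le_v1 δ _
            · exact nn_le_two_vq hq0 z _
        _ = D * (‖z (n (k+1)) - z (n k)‖₊ : ℝ≥0∞)
            + (2 * Z) * (‖δ (n (k+1)) - δ (n k)‖₊ : ℝ≥0∞) := by ring
  -- rewrite the target quantity as a single tsum of g
  rw [hn0]
  have hsplit : (∑' j, g j ^ q)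
      = ((‖a 0‖₊ : ℝ≥0∞) ^ q + ∑' k : ℕ, (‖a (n (k+1)) - a (n k)‖₊ : ℝ≥0∞) ^ q) := by
    rw [tsum_eq_zero_add' ENNReal.summable]
    rfl
  have hxsum : (∑' j, x j ^ q) ^ (1/q) ≤ Z := by
    have h := term_le_vq q z (n := n) ⟨hmono, hn0⟩
    rw [hn0] at h
    have hxeq : (∑' j, x j ^ q)
        = ((‖z 0‖₊ : ℝ≥0∞) ^ q + ∑' k : ℕ, (‖z (n (k+1)) - z (n k)‖₊ : ℝ≥0∞) ^ q) := by
      rw [tsum_eq_zero_add' ENNReal.summable]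
      rfl
    rw [hxeq]
    exact h
  have hesum : (∑' j, e j ^ q) ^ (1/q) ≤ D := by
    refine (lq_le_l1 hq1 e).trans ?_
    rw [tsum_eq_zero_add' ENNReal.summable]
    have : (∑' (k : ℕ), e (k + 1)) = ∑' k : ℕ, (‖δ (n (k+1)) - δ (n k)‖₊ : ℝ≥0∞) := rfl
    rw [this]
    show (0:ℝ≥0∞) + _ ≤ D
    rw [zero_add]
    exact le_trans le_add_self (v1_term δ ⟨hmono, hn0⟩)
  calc ((‖a 0‖₊ : ℝ≥0∞) ^ q + ∑' k : ℕ, (‖a (n (k+1)) - a (n k)‖₊ : ℝ≥0∞) ^ q) ^ (1/q)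
      = (∑' j, g j ^ q) ^ (1/q) := by rw [hsplit]
    _ ≤ (∑' j, (D * x j + (2 * Z) * e j) ^ q) ^ (1/q) := by
        refine ENNReal.rpow_le_rpow (ENNReal.tsum_le_tsum fun j => ?_) (by positivity)
        exact ENNReal.rpow_le_rpow (hgle j) hq0.le
    _ ≤ (∑' j, (D * x j) ^ q) ^ (1/q) + (∑' j, ((2 * Z) * e j) ^ q) ^ (1/q) :=
        minkowski_tsum hq1 _ _
    _ = D * (∑' j, x j ^ q) ^ (1/q) + (2 * Z) * (∑' j, e j ^ q) ^ (1/q) := by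
        rw [factor_lq hq0, factor_lq hq0]
    _ ≤ D * Z + (2 * Z) * D := by gcongr
    _ = 3 * D * Z := by ring
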